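/- arXiv:2605.16960 — 3 statements merged into one kernel-verified Lean document; each statement's English description precedes it below -/
import Mathlib

section
/- For matrices A, B ∈ ℂ^{n×m} with n ≥ m, the operator (spectral) norm of the Hadamard (entrywise) product satisfies ‖A ∘ B‖₂ ≤ √m · (max_{i,j} |A(i,j)|) · ‖B‖₂. -/
open scoped Matrix

/-- The operator (spectral) norm of a complex rectangular matrix, i.e. the norm of the
induced linear map between Euclidean spaces. -/
noncomputable def opNormC {n m : ℕ} (A : Matrix (Fin n) (Fin m) ℂ) : ℝ :=
  ‖LinearMap.toContinuousLinearMap (Matrix.toEuclideanLin A)‖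

/-- For matrices `A, B ∈ ℂ^{n×m}` with `n ≥ m`, the spectral norm of the Hadamard product
satisfies `‖A ∘ B‖₂ ≤ √m · (max_{i,j} |A(i,j)|) · ‖B‖₂`. -/
theorem hadamard_opNorm_le {n m : ℕ} (hnm : m ≤ n) (A B : Matrix (Fin n) (Fin m) ℂ) :
    opNormC (A ⊙ B) ≤ Real.sqrt m * (⨆ p : Fin n × Fin m, ‖A p.1 p.2‖) * opNormC B := by
  rcases Nat.eq_zero_or_pos m with hm | hm
  · -- trivial case m = 0
    subst hm
    have h0 : opNormC (A ⊙ B) = 0 := by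
      have : (Matrix.toEuclideanLin (A ⊙ B)).toContinuousLinearMap = 0 := by
        haveI : Subsingleton (EuclideanSpace ℂ (Fin 0)) :=
          ⟨fun a b => by ext i; exact i.elim0⟩
        ext x i
        rw [Subsingleton.elim x 0]
        simp
      simp [opNormC, this]
    simp [h0]
  -- now m ≥ 1, hence n ≥ 1
  have hn : 0 < n := lt_of_lt_of_le hm hnm
  haveI : Nonempty (Fin n × Fin m) := ⟨⟨⟨0, hn⟩, ⟨0, hm⟩⟩⟩
  set c : ℝ := ⨆ p : Fin n × Fin m, ‖A p.1 p.2‖ with hc_def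
  have hcA : ∀ i j, ‖A i j‖ ≤ c := fun i j =>
    le_ciSup (f := fun p : Fin n × Fin m => ‖A p.1 p.2‖) (Set.Finite.bddAbove (Set.finite_range _)) (⟨i, j⟩ : Fin n × Fin m)
  have hc0 : 0 ≤ c := le_trans (norm_nonneg _) (hcA ⟨0, hn⟩ ⟨0, hm⟩)
  have hB0 : 0 ≤ opNormC B := norm_nonneg _
  -- column bound
  have hcol : ∀ j, (∑ i, ‖B i j‖ ^ 2) ≤ opNormC B ^ 2 := by
    intro j
    set e : EuclideanSpace ℂ (Fin m) := EuclideanSpace.single j 1 with he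
    have h1 : ‖(Matrix.toEuclideanLin B).toContinuousLinearMap e‖ ≤ opNormC B * ‖e‖ :=
      ContinuousLinearMap.le_opNorm _ _
    have he1 : ‖e‖ = 1 := by simp [he, EuclideanSpace.norm_single]
    have hval : (Matrix.toEuclideanLin B).toContinuousLinearMap e =
        (WithLp.equiv 2 (Fin n → ℂ)).symm (fun i => B i j) := by
      simp only [LinearMap.coe_toContinuousLinearMap', he]
      rw [show (EuclideanSpace.single j (1:ℂ)) =
        (WithLp.equiv 2 (Fin m → ℂ)).symm (Pi.single j 1) from rfl,
        WithLp.equiv_symm_apply, Matrix.toEuclideanLin_apply_piLp_toLp]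
      congr 1
      ext i
      simp [Matrix.mulVec_single]
    have h2 : ‖(Matrix.toEuclideanLin B).toContinuousLinearMap e‖ ^ 2 = ∑ i, ‖B i j‖ ^ 2 := by
      rw [hval, EuclideanSpace.norm_eq]
      rw [Real.sq_sqrt (Finset.sum_nonneg fun _ _ => sq_nonneg _)]
      rfl
    have := h1
    rw [he1, mul_one] at this
    calc ∑ i, ‖B i j‖ ^ 2 = _ := h2.symm
      _ ≤ opNormC B ^ 2 := by
          apply pow_le_pow_left₀ (norm_nonneg _) this
  -- main bound
  have hC0 : 0 ≤ Real.sqrt m * c * opNormC B := by positivity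
  apply ContinuousLinearMap.opNorm_le_bound _ hC0
  intro x
  set y := (Matrix.toEuclideanLin (A ⊙ B)).toContinuousLinearMap x with hy
  have hyi : ∀ i, y i = ∑ j, (A i j * B i j) * x j := by
    intro i
    rfl
  have hxsq : ‖x‖ ^ 2 = ∑ j, ‖x j‖ ^ 2 := by
    rw [EuclideanSpace.norm_eq, Real.sq_sqrt (Finset.sum_nonneg fun _ _ => sq_nonneg _)]
  have key : ‖y‖ ^ 2 ≤ (Real.sqrt m * c * opNormC B * ‖x‖) ^ 2 := by
    have hysq : ‖y‖ ^ 2 = ∑ i, ‖y i‖ ^ 2 := by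
      rw [EuclideanSpace.norm_eq, Real.sq_sqrt (Finset.sum_nonneg fun _ _ => sq_nonneg _)]
    rw [hysq]
    have step1 : ∀ i, ‖y i‖ ^ 2 ≤ c ^ 2 * (m * ∑ j, (‖B i j‖ * ‖x j‖) ^ 2) := by
      intro i
      have h1 : ‖y i‖ ≤ c * ∑ j, ‖B i j‖ * ‖x j‖ := by
        rw [hyi i]
        calc ‖∑ j, (A i j * B i j) * x j‖ ≤ ∑ j, ‖(A i j * B i j) * x j‖ :=
              norm_sum_le _ _
          _ ≤ ∑ j, c * (‖B i j‖ * ‖x j‖) := by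
              apply Finset.sum_le_sum
              intro j _
              rw [norm_mul, norm_mul, mul_assoc]
              exact mul_le_mul_of_nonneg_right (hcA i j) (by positivity)
          _ = c * ∑ j, ‖B i j‖ * ‖x j‖ := by rw [Finset.mul_sum]
      have h2 : ‖y i‖ ^ 2 ≤ (c * ∑ j, ‖B i j‖ * ‖x j‖) ^ 2 :=
        pow_le_pow_left₀ (norm_nonneg _) h1 2
      refine h2.trans ?_
      rw [mul_pow]
      apply mul_le_mul_of_nonneg_left _ (sq_nonneg c)
      have := sq_sum_le_card_mul_sum_sq
        (s := (Finset.univ : Finset (Fin m))) (f := fun j => ‖B i j‖ * ‖x j‖)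
      simpa using this
    calc ∑ i, ‖y i‖ ^ 2 ≤ ∑ i, c ^ 2 * (m * ∑ j, (‖B i j‖ * ‖x j‖) ^ 2) :=
          Finset.sum_le_sum fun i _ => step1 i
      _ = c ^ 2 * m * ∑ j, (‖x j‖ ^ 2 * ∑ i, ‖B i j‖ ^ 2) := by
          rw [← Finset.mul_sum, ← Finset.mul_sum, mul_assoc, Finset.sum_comm]
          congr 1
          congr 1
          apply Finset.sum_congr rfl
          intro j _
          rw [Finset.mul_sum]
          apply Finset.sum_congr rfl
          intro i _
          ring
      _ ≤ c ^ 2 * m * ∑ j, (‖x j‖ ^ 2 * opNormC B ^ 2) := by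
          apply mul_le_mul_of_nonneg_left _ (by positivity)
          exact Finset.sum_le_sum fun j _ =>
            mul_le_mul_of_nonneg_left (hcol j) (sq_nonneg _)
      _ = (Real.sqrt m * c * opNormC B * ‖x‖) ^ 2 := by
          rw [← Finset.sum_mul, ← hxsq]
          have : (Real.sqrt m) ^ 2 = (m : ℝ) := Real.sq_sqrt (Nat.cast_nonneg m)
          ring_nf
          rw [Real.sq_sqrt (Nat.cast_nonneg m)]
          ring
  have := Real.sqrt_le_sqrt key
  rw [Real.sqrt_sq (norm_nonneg y), Real.sqrt_sq (by positivity)] at this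
  exact this
end

section
/- The constant √m in the Hadamard product bound is optimal: there exist n×m matrices A and B with |A(i,j)| = 1 for all i,j such that ‖A ∘ B‖₂ = √m · ‖B‖₂. In particular, B can be taken as the first m columns of the normalized n×n DFT matrix B(i,j) = ω^{(i-1)(j-1)}/√n with ω a primitive n-th root of unity, and A(i,j) = ω^{-(i-1)(j-1)}. -/
open scoped Matrix

open Finset Complex

private lemma euclid_apply {n m : ℕ} (M : Matrix (Fin n) (Fin m) ℂ)
    (v : EuclideanSpace ℂ (Fin m)) (i : Fin n) :
    Matrix.toEuclideanLin M v i = ∑ j, M i j * v j := by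
  simp [Matrix.toEuclideanLin_apply, Matrix.mulVec, dotProduct]

/-- norm of the constant matrix with entries `(√n)⁻¹`. -/
private lemma opNormC_const {n m : ℕ} (hm : 0 < m) (hn : 0 < n) :
    opNormC (fun (_ : Fin n) (_ : Fin m) => ((Real.sqrt n : ℝ) : ℂ)⁻¹) = Real.sqrt m := by
  set C : Matrix (Fin n) (Fin m) ℂ := fun _ _ => ((Real.sqrt n : ℝ) : ℂ)⁻¹ with hC
  set L := LinearMap.toContinuousLinearMap (Matrix.toEuclideanLin C) with hL
  have hsqn : (0:ℝ) < Real.sqrt n := Real.sqrt_pos.2 (by exact_mod_cast hn)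
  have hLx : ∀ x : EuclideanSpace ℂ (Fin m), ‖L x‖ = ‖∑ j, x j‖ := by
    intro x
    have happ : ∀ i : Fin n, L x i = ((Real.sqrt n : ℝ) : ℂ)⁻¹ * ∑ j, x j := by
      intro i
      have : L x i = ∑ j, C i j * x j := euclid_apply C x i
      rw [this, hC, ← Finset.mul_sum]
    rw [EuclideanSpace.norm_eq]
    have hterm : ∀ i : Fin n, ‖L x i‖ ^ 2 = (n:ℝ)⁻¹ * ‖∑ j, x j‖ ^ 2 := by
      intro i
      rw [happ i, norm_mul, mul_pow, norm_inv, Complex.norm_real,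
        Real.norm_eq_abs, _root_.abs_of_nonneg (Real.sqrt_nonneg _), inv_pow,
        Real.sq_sqrt (by positivity)]
    rw [Finset.sum_congr rfl fun i _ => hterm i, Finset.sum_const, Finset.card_univ,
      Fintype.card_fin, nsmul_eq_mul]
    rw [← mul_assoc, mul_inv_cancel₀ (by exact_mod_cast hn.ne' : (n:ℝ) ≠ 0), one_mul,
      Real.sqrt_sq (norm_nonneg _)]
  refine le_antisymm ?_ ?_
  · refine L.opNorm_le_bound (Real.sqrt_nonneg _) fun x => ?_
    rw [hLx x]
    have h1 : ‖∑ j, x j‖ ≤ ∑ j, ‖x j‖ := norm_sum_le _ _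
    have h2 : (∑ j, ‖x j‖) ^ 2 ≤ (m:ℝ) * ∑ j, ‖x j‖ ^ 2 := by
      simpa using sq_sum_le_card_mul_sum_sq (s := (Finset.univ : Finset (Fin m)))
        (f := fun j => ‖x j‖)
    have h3 : ∑ j, ‖x j‖ ≤ Real.sqrt ((m:ℝ) * ∑ j, ‖x j‖ ^ 2) := by
      rw [← Real.sqrt_sq (by positivity : (0:ℝ) ≤ ∑ j, ‖x j‖)]
      exact Real.sqrt_le_sqrt h2
    calc ‖∑ j, x j‖ ≤ ∑ j, ‖x j‖ := h1
      _ ≤ Real.sqrt ((m:ℝ) * ∑ j, ‖x j‖ ^ 2) := h3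
      _ = Real.sqrt m * Real.sqrt (∑ j, ‖x j‖ ^ 2) := Real.sqrt_mul (by positivity) _
      _ = Real.sqrt m * ‖x‖ := by rw [EuclideanSpace.norm_eq]
  · set y : EuclideanSpace ℂ (Fin m) := (WithLp.equiv 2 (Fin m → ℂ)).symm (fun _ => 1) with hy
    have hyy : ∀ j, y j = 1 := fun j => rfl
    have hny : ‖y‖ = Real.sqrt m := by
      rw [EuclideanSpace.norm_eq]
      simp [hyy]
    have hLy : ‖L y‖ = (m:ℝ) := by
      rw [hLx y]
      simp [hyy]
    have := L.ratio_le_opNorm y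
    rw [hLy, hny] at this
    rwa [Real.div_sqrt] at this

/-- a matrix acting isometrically has operator norm 1. -/
private lemma opNormC_isometry {n m : ℕ} (hm : 0 < m) (M : Matrix (Fin n) (Fin m) ℂ)
    (hiso : ∀ x : EuclideanSpace ℂ (Fin m), ‖Matrix.toEuclideanLin M x‖ = ‖x‖) :
    opNormC M = 1 := by
  set L := LinearMap.toContinuousLinearMap (Matrix.toEuclideanLin M) with hL
  have hL' : ∀ x, ‖L x‖ = ‖x‖ := hiso
  refine le_antisymm (L.opNorm_le_bound zero_le_one fun x => by rw [hL' x, one_mul]) ?_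
  set y : EuclideanSpace ℂ (Fin m) := EuclideanSpace.single ⟨0, hm⟩ (1:ℂ) with hy
  have hny : ‖y‖ = 1 := by rw [hy, EuclideanSpace.norm_single]; simp
  have := L.ratio_le_opNorm y
  rwa [hL' y, hny, div_one] at this

/-- The constant `√m` in the Hadamard product bound is optimal: there exist `n×m` matrices
`A` and `B` with all entries of `A` of modulus 1 such that `‖A ∘ B‖₂ = √m · ‖B‖₂`.
In particular, `B` can be taken as the first `m` columns of the normalized DFT matrix
`B(i,j) = ω^{(i-1)(j-1)}/√n` with `ω` a primitive `n`-th root of unity, and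
`A(i,j) = ω^{-(i-1)(j-1)}`. -/
theorem hadamard_opNorm_sqrt_optimal {n m : ℕ} (hm : 0 < m) (hmn : m ≤ n) :
    ∃ A B : Matrix (Fin n) (Fin m) ℂ,
      (∀ i j, ‖A i j‖ = 1) ∧
      opNormC (A ⊙ B) = Real.sqrt m * opNormC B ∧
      ∃ ω : ℂ, IsPrimitiveRoot ω n ∧
        (∀ i j, A i j = ω⁻¹ ^ ((i : ℕ) * (j : ℕ))) ∧
        (∀ i j, B i j = ω ^ ((i : ℕ) * (j : ℕ)) / (Real.sqrt n : ℂ)) := by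
  have hn : 0 < n := lt_of_lt_of_le hm hmn
  set ω : ℂ := Complex.exp (2 * Real.pi * Complex.I / n) with hωdef
  have hω : IsPrimitiveRoot ω n := Complex.isPrimitiveRoot_exp n hn.ne'
  have hωn : ω ^ n = 1 := hω.pow_eq_one
  have hnorm : ‖ω‖ = 1 := Complex.norm_eq_one_of_pow_eq_one hωn hn.ne'
  have hω0 : ω ≠ 0 := fun h => by simp [h] at hnorm
  have hconj : (starRingEnd ℂ) ω = ω⁻¹ := by
    have h1 : ω * (starRingEnd ℂ) ω = 1 := by
      rw [Complex.mul_conj]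
      rw [Complex.normSq_eq_norm_sq]
      rw [hnorm]
      norm_num
    field_simp
    linear_combination h1
  set A : Matrix (Fin n) (Fin m) ℂ := fun i j => ω⁻¹ ^ ((i : ℕ) * (j : ℕ)) with hA
  set B : Matrix (Fin n) (Fin m) ℂ := fun i j => ω ^ ((i : ℕ) * (j : ℕ)) / (Real.sqrt n : ℂ)
    with hB
  have hsqn : (0:ℝ) < Real.sqrt n := Real.sqrt_pos.2 (by exact_mod_cast hn)
  have hsqnC : ((Real.sqrt n : ℝ) : ℂ) ≠ 0 := by exact_mod_cast hsqn.ne'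
  have hsq_mul : ((Real.sqrt n : ℝ) : ℂ) * ((Real.sqrt n : ℝ) : ℂ) = (n : ℂ) := by
    rw [← Complex.ofReal_mul, Real.mul_self_sqrt (by positivity)]
    norm_num
  -- orthonormality of columns of B
  have S1 : ∀ j k : Fin m,
      ∑ i : Fin n, B i j * (starRingEnd ℂ) (B i k) = if j = k then 1 else 0 := by
    intro j k
    set ζ : ℂ := ω ^ (j:ℕ) * (ω ^ (k:ℕ))⁻¹ with hζ
    have hterm : ∀ i : Fin n,
        B i j * (starRingEnd ℂ) (B i k) = ζ ^ (i:ℕ) * ((n:ℂ))⁻¹ := by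
      intro i
      rw [hB]
      simp only [map_div₀, map_pow, hconj, Complex.conj_ofReal]
      rw [div_mul_div_comm, hsq_mul]
      congr 1
      rw [mul_comm (i:ℕ) (j:ℕ), mul_comm (i:ℕ) (k:ℕ), pow_mul, pow_mul, inv_pow,
        ← mul_pow, hζ]
    rw [Finset.sum_congr rfl fun i _ => hterm i, ← Finset.sum_mul]
    rw [Fin.sum_univ_eq_sum_range (fun i => ζ ^ i) n]
    by_cases hjk : j = k
    · subst hjk
      have : ζ = 1 := by rw [hζ, mul_inv_cancel₀ (pow_ne_zero _ hω0)]
      rw [if_pos rfl, this]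
      simp only [one_pow, Finset.sum_const, Finset.card_range, nsmul_eq_mul, mul_one]
      rw [mul_inv_cancel₀ (by exact_mod_cast hn.ne' : (n:ℂ) ≠ 0)]
    · rw [if_neg hjk]
      have hζn : ζ ^ n = 1 := by
        rw [hζ, mul_pow, ← pow_mul, mul_comm (j:ℕ) n, pow_mul, hωn, one_pow, one_mul,
          inv_pow, ← pow_mul, mul_comm (k:ℕ) n, pow_mul, hωn, one_pow, inv_one]
      have hζ1 : ζ ≠ 1 := by
        intro h
        apply hjk
        have hpow : ω ^ (j:ℕ) = ω ^ (k:ℕ) := by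
          have := mul_inv_eq_one₀ (pow_ne_zero (k:ℕ) hω0) |>.mp (hζ ▸ h)
          exact this
        exact Fin.ext (hω.pow_inj (lt_of_lt_of_le j.isLt hmn) (lt_of_lt_of_le k.isLt hmn) hpow)
      rw [geom_sum_eq hζ1 n, hζn, sub_self, zero_div, zero_mul]
  -- B acts isometrically
  have hiso : ∀ x : EuclideanSpace ℂ (Fin m), ‖Matrix.toEuclideanLin B x‖ = ‖x‖ := by
    intro x
    have key : ∑ i : Fin n,
        (Matrix.toEuclideanLin B x i) * (starRingEnd ℂ) (Matrix.toEuclideanLin B x i)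
          = ∑ j : Fin m, x j * (starRingEnd ℂ) (x j) := by
      simp_rw [euclid_apply]
      calc ∑ i : Fin n, (∑ j, B i j * x j) * (starRingEnd ℂ) (∑ k, B i k * x k)
          = ∑ i : Fin n, ∑ j : Fin m, ∑ k : Fin m,
              (B i j * (starRingEnd ℂ) (B i k)) * (x j * (starRingEnd ℂ) (x k)) := by
            refine Finset.sum_congr rfl fun i _ => ?_
            rw [map_sum, Finset.sum_mul_sum]
            refine Finset.sum_congr rfl fun j _ => Finset.sum_congr rfl fun k _ => ?_
            rw [map_mul]; ring
        _ = ∑ j : Fin m, ∑ i : Fin n, ∑ k : Fin m,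
              (B i j * (starRingEnd ℂ) (B i k)) * (x j * (starRingEnd ℂ) (x k)) :=
            Finset.sum_comm
        _ = ∑ j : Fin m, ∑ k : Fin m,
              (∑ i : Fin n, B i j * (starRingEnd ℂ) (B i k)) * (x j * (starRingEnd ℂ) (x k)) := by
            refine Finset.sum_congr rfl fun j _ => ?_
            rw [Finset.sum_comm]
            exact Finset.sum_congr rfl fun k _ => (Finset.sum_mul _ _ _).symm
        _ = ∑ j : Fin m, ∑ k : Fin m,
              (if j = k then (1:ℂ) else 0) * (x j * (starRingEnd ℂ) (x k)) := by
            refine Finset.sum_congr rfl fun j _ => Finset.sum_congr rfl fun k _ => ?_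
            rw [S1 j k]
        _ = ∑ j : Fin m, x j * (starRingEnd ℂ) (x j) := by
            simp
    have key' : ∑ i : Fin n, ‖Matrix.toEuclideanLin B x i‖ ^ 2 = ∑ j : Fin m, ‖x j‖ ^ 2 := by
      have := congrArg Complex.re key
      simpa [Complex.mul_conj, Complex.normSq_eq_norm_sq,
        ← Complex.ofReal_pow, Complex.ofReal_re] using this
    rw [EuclideanSpace.norm_eq, EuclideanSpace.norm_eq, key']
  -- the Hadamard product is the constant matrix
  have hAB : A ⊙ B = fun (_ : Fin n) (_ : Fin m) => ((Real.sqrt n : ℝ) : ℂ)⁻¹ := by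
    funext i j
    show A i j * B i j = _
    rw [hA, hB]
    simp only []
    rw [inv_pow, div_eq_mul_inv, ← mul_assoc, inv_mul_cancel₀ (pow_ne_zero _ hω0), one_mul]
  refine ⟨A, B, ?_, ?_, ω, hω, fun i j => rfl, fun i j => rfl⟩
  · intro i j
    rw [hA]
    simp only []
    rw [norm_pow, norm_inv, hnorm, inv_one, one_pow]
  · rw [hAB, opNormC_const hm hn, opNormC_isometry hm B hiso, mul_one]
end

section
/- For a vector a ∈ ℝ^M with entries sorted in descending order, there exists an integer N with 1 ≤ N ≤ M such that a_N − (1/N)(∑_{n=1}^N a_n − 1) ≥ 0 and (if N < M) a_{N+1} − (1/N)(∑_{n=1}^N a_n − 1) < 0; moreover, the vector y* defined by y*_m = a_m − (1/N)(∑_{n=1}^N a_n − 1) for m ≤ N and y*_m = 0 for m > N is the Euclidean projection of a onto the probability simplex Δ = {y ∈ ℝ^M : y ≥ 0, ∑_m y_m = 1}, i.e., it minimizes ‖y − a‖₂² over y ∈ Δ. -/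
/-- Euclidean projection onto the probability simplex via the sorted-threshold formula:
for `a ∈ ℝ^M` sorted in descending order there is `1 ≤ N ≤ M` such that
`a_N − (1/N)(∑_{n=1}^N a_n − 1) ≥ 0`, `a_{N+1} − (1/N)(∑_{n=1}^N a_n − 1) < 0` (if `N < M`),
and the vector `y*` with `y*_m = a_m − (1/N)(∑_{n=1}^N a_n − 1)` for `m ≤ N` and `0` otherwise
minimizes `‖y − a‖₂²` over the simplex `Δ`. -/
theorem simplex_projection_threshold {M : ℕ} (hM : 1 ≤ M) (a : Fin M → ℝ)
    (hsort : ∀ i j : Fin M, i ≤ j → a j ≤ a i) :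
    ∃ N : ℕ, ∃ hN1 : 1 ≤ N, ∃ hNM : N ≤ M,
      (a ⟨N - 1, by omega⟩ -
          ((∑ i : Fin M, if (i : ℕ) < N then a i else 0) - 1) / N ≥ 0) ∧
      (∀ h : N < M, a ⟨N, h⟩ -
          ((∑ i : Fin M, if (i : ℕ) < N then a i else 0) - 1) / N < 0) ∧
      (let y : Fin M → ℝ := fun p =>
        if (p : ℕ) < N then
          a p - ((∑ i : Fin M, if (i : ℕ) < N then a i else 0) - 1) / N
        else 0;
      (∀ p, 0 ≤ y p) ∧ (∑ p, y p = 1) ∧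
        ∀ z : Fin M → ℝ, (∀ p, 0 ≤ z p) → (∑ p, z p = 1) →
          ∑ p, (y p - a p) ^ 2 ≤ ∑ p, (z p - a p) ^ 2) := by
  classical
  set a' : ℕ → ℝ := fun n => if h : n < M then a ⟨n, h⟩ else 0 with ha'
  set S : ℕ → ℝ := fun N => ∑ i : Fin M, if (i : ℕ) < N then a i else 0 with hS
  have hSrange : ∀ N, N ≤ M → S N = ∑ n ∈ Finset.range N, a' n := by
    intro N hNM
    have h1 : S N = ∑ n ∈ Finset.range M, (if n < N then a' n else 0) := by
      rw [hS]
      rw [← Fin.sum_univ_eq_sum_range (fun n => if n < N then a' n else 0) M]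
      refine Finset.sum_congr rfl fun i _ => ?_
      have : a' (i : ℕ) = a i := by rw [ha']; simp [i.isLt]
      rw [this]
    rw [h1]
    rw [← Finset.sum_subset (Finset.range_subset_range.2 hNM)
      (fun x _ hx => if_neg (by simpa using hx))]
    exact Finset.sum_congr rfl fun x hx => if_pos (Finset.mem_range.1 hx)
  set P : ℕ → Prop := fun k => 1 ≤ k ∧ k ≤ M ∧ S k - 1 ≤ (k : ℝ) * a' (k - 1) with hP
  have hP1 : P 1 := by
    refine ⟨le_refl 1, hM, ?_⟩
    have : S 1 = a' 0 := by
      rw [hSrange 1 hM, Finset.sum_range_one]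
    rw [this]; push_cast; linarith
  set N := Nat.findGreatest P M with hNdef
  have hN1 : 1 ≤ N := Nat.le_findGreatest hM hP1
  have hNM : N ≤ M := Nat.findGreatest_le M
  have hPN : P N := Nat.findGreatest_spec (by omega) hP1
  have hNpos : (0:ℝ) < N := by exact_mod_cast hN1
  set t : ℝ := (S N - 1) / N with ht
  have hta : t ≤ a' (N - 1) := by
    rw [ht, div_le_iff₀ hNpos]
    have := hPN.2.2
    linarith [this]
  have hsucc : ∀ h : N < M, a ⟨N, h⟩ - t < 0 := by
    intro h
    have hnP : ¬ P (N + 1) := Nat.findGreatest_is_greatest (Nat.lt_succ_self N) h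
    have h3 : ¬ (S (N+1) - 1 ≤ ((N:ℝ) + 1) * a' N) := by
      intro hcon
      exact hnP ⟨Nat.succ_le_succ (Nat.zero_le N), h, by push_cast; simpa using hcon⟩
    push_neg at h3
    have hSsucc : S (N + 1) = S N + a' N := by
      rw [hSrange (N+1) (by omega), hSrange N hNM, Finset.sum_range_succ]
    have h4 : (N:ℝ) * a' N < S N - 1 := by rw [hSsucc] at h3; nlinarith
    have h5 : a' N < t := by rw [ht, lt_div_iff₀ hNpos]; linarith
    have : a' N = a ⟨N, h⟩ := by rw [ha']; simp [h]
    linarith [this ▸ h5]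
  have haN1 : a' (N-1) = a ⟨N-1, by omega⟩ := by
    simp only [ha']; rw [dif_pos (show N-1 < M by omega)]
  have hrange : ∀ g : ℕ → ℝ,
      (∑ p : Fin M, if (p : ℕ) < N then g p else 0) = ∑ n ∈ Finset.range N, g n := by
    intro g
    rw [Fin.sum_univ_eq_sum_range (fun n => if n < N then g n else 0) M]
    rw [← Finset.sum_subset (Finset.range_subset_range.2 hNM)
      (fun x _ hx => if_neg (by simpa using hx))]
    exact Finset.sum_congr rfl fun x hx => if_pos (Finset.mem_range.1 hx)
  have hNt : (N : ℝ) * t = S N - 1 := by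
    rw [ht]; field_simp
  set Y : Fin M → ℝ := fun p => if (p : ℕ) < N then a p - t else 0 with hY
  have hYnn : ∀ p, 0 ≤ Y p := by
    intro p
    by_cases hp : (p : ℕ) < N
    · have h1 : a ⟨N - 1, by omega⟩ ≤ a p := hsort p ⟨N - 1, by omega⟩ (by
        simp [Fin.le_def]; omega)
      have h2 : t ≤ a p := le_trans (haN1 ▸ hta) h1
      simp only [hY, if_pos hp]; linarith
    · simp [hY, hp]
  have hYsum : ∑ p, Y p = 1 := by
    have h1 : ∀ p : Fin M, Y p = if (p : ℕ) < N then a' (p : ℕ) - t else 0 := by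
      intro p
      have : a' (p : ℕ) = a p := by rw [ha']; simp [p.isLt]
      rw [hY, this]
    calc ∑ p, Y p = ∑ p : Fin M, if (p : ℕ) < N then a' (p : ℕ) - t else 0 :=
          Finset.sum_congr rfl fun p _ => h1 p
      _ = ∑ n ∈ Finset.range N, (a' n - t) := hrange (fun n => a' n - t)
      _ = (∑ n ∈ Finset.range N, a' n) - (N : ℝ) * t := by
          rw [Finset.sum_sub_distrib, Finset.sum_const, Finset.card_range,
            nsmul_eq_mul]
      _ = S N - (S N - 1) := by rw [← hSrange N hNM, hNt]
      _ = 1 := by ring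
  have htp : ∀ p : Fin M, ¬ (p : ℕ) < N → a p ≤ t := by
    intro p hp
    have hNM' : N < M := lt_of_le_of_lt (Nat.le_of_not_lt hp) p.isLt
    have h1 : a p ≤ a ⟨N, hNM'⟩ := hsort ⟨N, hNM'⟩ p (by simp [Fin.le_def]; omega)
    have h2 := hsucc hNM'
    linarith
  have hopt : ∀ z : Fin M → ℝ, (∀ p, 0 ≤ z p) → (∑ p, z p = 1) →
      ∑ p, (Y p - a p) ^ 2 ≤ ∑ p, (z p - a p) ^ 2 := by
    intro z hz hzs
    have hcross : ∀ p, (z p - Y p) * (Y p - a p) =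
        t * (Y p - z p) + (if (p : ℕ) < N then 0 else z p * (t - a p)) := by
      intro p
      by_cases hp : (p : ℕ) < N
      · simp only [hY, if_pos hp]; ring
      · simp only [hY, if_neg hp]; ring
    have hcs : 0 ≤ ∑ p, (z p - Y p) * (Y p - a p) := by
      have h1 : ∑ p, (z p - Y p) * (Y p - a p) =
          t * ((∑ p, Y p) - ∑ p, z p) +
            ∑ p : Fin M, (if (p : ℕ) < N then 0 else z p * (t - a p)) := by
        calc ∑ p, (z p - Y p) * (Y p - a p)
            = ∑ p, (t * (Y p - z p) + if (p : ℕ) < N then 0 else z p * (t - a p)) :=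
              Finset.sum_congr rfl fun p _ => hcross p
          _ = _ := by
              rw [Finset.sum_add_distrib]
              congr 1
              rw [← Finset.mul_sum, Finset.sum_sub_distrib]
      rw [h1, hYsum, hzs]
      have h2 : 0 ≤ ∑ p : Fin M, (if (p : ℕ) < N then 0 else z p * (t - a p)) := by
        refine Finset.sum_nonneg fun p _ => ?_
        by_cases hp : (p : ℕ) < N
        · simp [hp]
        · simp only [if_neg hp]
          exact mul_nonneg (hz p) (by linarith [htp p hp])
      linarith
    have hdecomp : ∑ p, (z p - a p) ^ 2 =
        (∑ p, (z p - Y p) ^ 2) + 2 * (∑ p, (z p - Y p) * (Y p - a p)) +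
          ∑ p, (Y p - a p) ^ 2 := by
      calc ∑ p, (z p - a p) ^ 2
          = ∑ p, ((z p - Y p) ^ 2 + 2 * ((z p - Y p) * (Y p - a p)) +
              (Y p - a p) ^ 2) := Finset.sum_congr rfl fun p _ => by ring
        _ = _ := by
            rw [Finset.sum_add_distrib, Finset.sum_add_distrib, ← Finset.mul_sum]
    have hsq : 0 ≤ ∑ p, (z p - Y p) ^ 2 :=
      Finset.sum_nonneg fun p _ => sq_nonneg _
    linarith
  refine ⟨N, hN1, hNM, ?_, hsucc, ⟨hYnn, hYsum, hopt⟩⟩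
  rw [← haN1]; linarith
end
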